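/- For every e ≥ 1 and every k with |S_{2,e}| ≤ k < |S_{2,e+1}|, there exists a subgroup L of ℤ² that is a linear QPL(2,e) code, has index k in ℤ², and satisfies k·ℤ² ⊆ L (so L is k-periodic and induces a linear QPL(2,e,k) code over the alphabet ℤ/kℤ). -/

import Mathlib

open Set

/-- The Lee (Manhattan) distance between two words in `ℤ^n`. -/
def leeDist {n : ℕ} (v w : Fin n → ℤ) : ℕ := ∑ i, (v i - w i).natAbs

/-- The Lee sphere `S_{n,r}` of radius `r` centered at the origin. -/
def leeSphere (n r : ℕ) : Set (Fin n → ℤ) := {x | leeDist x 0 ≤ r}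

/-- `|S_{n,r}|`, the cardinality of the Lee sphere. -/
noncomputable def sphereCard (n r : ℕ) : ℕ := (leeSphere n r).ncard

/-- `L` is a quasi-perfect `e`-error-correcting Lee code `QPL(n,e)`. -/
def IsQPLCode {n : ℕ} (e : ℕ) (L : Set (Fin n → ℤ)) : Prop :=
  (∀ v ∈ L, ∀ w ∈ L, v ≠ w → 2 * e + 1 ≤ leeDist v w) ∧
  ∀ x : Fin n → ℤ, ∃ c ∈ L, leeDist x c ≤ e + 1


/-- Key covering lemma. -/
lemma cov_nonneg (c ρ m : ℤ) (hc : 1 ≤ c) (h1 : c ≤ ρ) (h2 : ρ ≤ c + 1)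
    (hm0 : 0 ≤ m) (hm1 : m ≤ ρ * (c + 1)) :
    ∃ a b : ℤ, |a| + |b| ≤ ρ ∧ c * a - (c + 1) * b = m := by
  have hc1 : (0:ℤ) < c + 1 := by linarith
  set a0 := (-m) % (c + 1) with ha0def
  have ha0 : 0 ≤ a0 := Int.emod_nonneg _ (ne_of_gt hc1)
  have ha0' : a0 < c + 1 := Int.emod_lt_of_pos _ hc1
  have hdvd : (c + 1) ∣ (m + a0) := by
    refine ⟨-((-m) / (c + 1)), ?_⟩
    rw [ha0def, Int.emod_def]; ring
  have step0 : m ≤ ρ * (c + 1) - a0 := by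
    by_contra hcon
    push_neg at hcon
    have hd : (c + 1) ∣ (m + a0 - ρ * (c + 1)) := by
      exact dvd_sub hdvd ⟨ρ, by ring⟩
    have hpos : 0 < m + a0 - ρ * (c + 1) := by linarith
    have := Int.le_of_dvd hpos hd
    linarith
  by_cases hcase : (2 * c + 1) * a0 - (c + 1) * ρ ≤ m
  · obtain ⟨b, hb⟩ : (c + 1) ∣ (c * a0 - m) := by
      have h : c * a0 - m = (c + 1) * a0 - (m + a0) := by ring
      rw [h]; exact dvd_sub (dvd_mul_right _ _) hdvd
    refine ⟨a0, b, ?_, by linarith⟩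
    have hub : b ≤ ρ - a0 := by nlinarith
    have hlb : -(ρ - a0) ≤ b := by nlinarith
    have : |b| ≤ ρ - a0 := abs_le.mpr ⟨hlb, hub⟩
    rw [abs_of_nonneg ha0]; linarith
  · push_neg at hcase
    have ha1 : 1 ≤ a0 := by nlinarith
    have hstep : m ≤ (2 * c + 1) * a0 - (c + 1) * ρ - (c + 1) := by
      have hd : (c + 1) ∣ ((2 * c + 1) * a0 - (c + 1) * ρ - m) := by
        have h : (2 * c + 1) * a0 - (c + 1) * ρ - m
            = (c + 1) * (2 * a0 - ρ) - (m + a0) := by ring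
        rw [h]; exact dvd_sub (dvd_mul_right _ _) hdvd
      have hpos : 0 < (2 * c + 1) * a0 - (c + 1) * ρ - m := by linarith
      have := Int.le_of_dvd hpos hd
      linarith
    obtain ⟨b, hb⟩ : (c + 1) ∣ (c * (a0 - (c + 1)) - m) := by
      have h : c * (a0 - (c + 1)) - m = (c + 1) * (a0 - c) - (m + a0) := by ring
      rw [h]; exact dvd_sub (dvd_mul_right _ _) hdvd
    refine ⟨a0 - (c + 1), b, ?_, by linarith⟩
    have hub : b ≤ ρ - (c + 1) + a0 := by nlinarith
    have hlb : -(ρ - (c + 1) + a0) ≤ b := by nlinarith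
    have hB : |b| ≤ ρ - (c + 1) + a0 := abs_le.mpr ⟨hlb, hub⟩
    have ha : |a0 - (c + 1)| = c + 1 - a0 := by
      rw [abs_of_nonpos (by linarith)]; ring
    rw [ha]; linarith

lemma cov (c ρ m : ℤ) (hc : 1 ≤ c) (h1 : c ≤ ρ) (h2 : ρ ≤ c + 1)
    (hm : |m| ≤ ρ * (c + 1)) :
    ∃ a b : ℤ, |a| + |b| ≤ ρ ∧ c * a - (c + 1) * b = m := by
  rcases le_or_gt 0 m with h | h
  · exact cov_nonneg c ρ m hc h1 h2 h (by rwa [abs_of_nonneg h] at hm)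
  · obtain ⟨a, b, hab, heq⟩ := cov_nonneg c ρ (-m) hc h1 h2 (by linarith)
      (by rwa [abs_of_neg h] at hm)
    exact ⟨-a, -b, by simpa [abs_neg] using hab, by linarith⟩

lemma mindist (e c k x y : ℤ) (he : 1 ≤ e) (hec : e ≤ c) (hk : 2 * e * (c + 1) < k)
    (hdvd : k ∣ (c * x - (c + 1) * y)) (hxy : |x| + |y| ≤ 2 * e) :
    x = 0 ∧ y = 0 := by
  have hx0 := abs_nonneg x
  have hy0 := abs_nonneg y
  have habs : |c * x - (c + 1) * y| < k := by
    have t1 : |c * x - (c + 1) * y| ≤ |c * x| + |(c + 1) * y| := abs_sub _ _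
    rw [abs_mul, abs_mul, abs_of_nonneg (by linarith : (0:ℤ) ≤ c),
      abs_of_nonneg (by linarith : (0:ℤ) ≤ c + 1)] at t1
    nlinarith
  have h0 : c * x - (c + 1) * y = 0 := Int.eq_zero_of_abs_lt_dvd hdvd habs
  have hcop : IsCoprime ((c:ℤ) + 1) c := ⟨1, -1, by ring⟩
  have hdx : (c + 1) ∣ x := hcop.dvd_of_dvd_mul_left ⟨y, by linarith⟩
  rcases eq_or_ne x 0 with hx | hx
  · refine ⟨hx, ?_⟩
    have : (c + 1) * y = 0 := by rw [hx] at h0; linarith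
    rcases mul_eq_zero.mp this with h | h
    · exact absurd h (by linarith)
    · exact h
  · exfalso
    have h1 : c + 1 ≤ |x| := Int.le_of_dvd (abs_pos.mpr hx) ((dvd_abs _ _).mpr hdx)
    have h2 : c * |x| = (c + 1) * |y| := by
      have : |c * x| = |(c + 1) * y| := by rw [show c * x = (c+1) * y by linarith]
      rwa [abs_mul, abs_mul, abs_of_nonneg (by linarith : (0:ℤ) ≤ c),
        abs_of_nonneg (by linarith : (0:ℤ) ≤ c + 1)] at this
    nlinarith

lemma leeDist_cast (v w : Fin 2 → ℤ) :
    (leeDist v w : ℤ) = |v 0 - w 0| + |v 1 - w 1| := by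
  simp [leeDist, Fin.sum_univ_two, Int.natCast_natAbs]

lemma sphereCard_eq (r : ℕ) (hr : 1 ≤ r) : sphereCard 2 r = 2 * r * r + 2 * r + 1 := by
  set K : ℕ := 2 * r * r + 2 * r + 1 with hKdef
  haveI : NeZero K := ⟨by omega⟩
  have hr' : (1:ℤ) ≤ (r:ℤ) := by exact_mod_cast hr
  have hKZ : (K:ℤ) = 2 * r * r + 2 * r + 1 := by rw [hKdef]; push_cast; ring
  set g : (Fin 2 → ℤ) → ZMod K := fun x => ((r * x 0 - (r + 1) * x 1 : ℤ) : ZMod K)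
    with hgdef
  have hmem : ∀ v : Fin 2 → ℤ, v ∈ leeSphere 2 r → |v 0| + |v 1| ≤ (r:ℤ) := by
    intro v hv
    have : (leeDist v 0 : ℤ) ≤ (r:ℤ) := by exact_mod_cast hv
    rw [leeDist_cast] at this
    simpa using this
  have hinj : Set.InjOn g (leeSphere 2 r) := by
    intro v hv w hw hgvw
    have hdvd : (K:ℤ) ∣ ((r:ℤ) * (v 0 - w 0) - ((r:ℤ) + 1) * (v 1 - w 1)) := by
      rw [← ZMod.intCast_zmod_eq_zero_iff_dvd]
      push_cast
      have h1 : g v - g w = 0 := sub_eq_zero.mpr hgvw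
      rw [hgdef] at h1
      push_cast at h1
      rw [← h1]; ring
    have hxy : |v 0 - w 0| + |v 1 - w 1| ≤ 2 * (r:ℤ) := by
      have h1 := hmem v hv
      have h2 := hmem w hw
      have := abs_sub (v 0) (w 0)
      have := abs_sub (v 1) (w 1)
      linarith
    obtain ⟨hx, hy⟩ := mindist r r K (v 0 - w 0) (v 1 - w 1) hr' le_rfl
      (by rw [hKZ]; nlinarith) hdvd hxy
    funext i
    fin_cases i
    · simpa using sub_eq_zero.mp hx
    · simpa using sub_eq_zero.mp hy
  have hsurj : ∀ z : ZMod K, ∃ x ∈ leeSphere 2 r, g x = z := by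
    intro z
    have hval : z.val < K := ZMod.val_lt z
    set m0 : ℤ := (z.val : ℤ) with hm0def
    have hm00 : 0 ≤ m0 := Int.natCast_nonneg _
    have hm01 : m0 ≤ (K:ℤ) - 1 := by
      have : z.val ≤ K - 1 := by omega
      rw [hm0def]
      have hK1 : ((K - 1 : ℕ) : ℤ) = (K:ℤ) - 1 := by
        have : (1:ℕ) ≤ K := by omega
        push_cast [this]; ring
      calc (z.val : ℤ) ≤ ((K - 1 : ℕ) : ℤ) := by exact_mod_cast this
        _ = (K:ℤ) - 1 := hK1
    set m : ℤ := if m0 ≤ (r:ℤ) * ((r:ℤ) + 1) then m0 else m0 - K with hmdef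
    have hmabs : |m| ≤ (r:ℤ) * ((r:ℤ) + 1) := by
      rw [hmdef]
      split_ifs with h
      · rwa [abs_of_nonneg hm00]
      · push_neg at h
        rw [abs_le]
        constructor
        · rw [hKZ]; nlinarith
        · rw [hKZ]; nlinarith
    obtain ⟨a, b, hab, heq⟩ := cov r r m hr' le_rfl (by linarith) hmabs
    refine ⟨![a, b], ?_, ?_⟩
    · show leeDist ![a, b] 0 ≤ r
      have hcast : (leeDist ![a, b] 0 : ℤ) = |a| + |b| := by
        rw [leeDist_cast]; simp
      have : (leeDist ![a, b] 0 : ℤ) ≤ (r:ℤ) := by rw [hcast]; linarith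
      exact_mod_cast this
    · show ((r * (![a, b] 0) - (r + 1) * (![a, b] 1) : ℤ) : ZMod K) = z
      have h1 : ((r:ℤ) * (![a, b] 0) - ((r:ℤ) + 1) * (![a, b] 1)) = m := by
        simpa using heq
      rw [show ((r:ℤ) * (![a, b] 0) - ((r:ℤ) + 1) * (![a, b] 1) : ℤ)
          = ((r:ℤ) * (![a, b] 0) - ((r:ℤ) + 1) * (![a, b] 1)) from rfl]
      rw [h1, hmdef]
      split_ifs with h
      · rw [hm0def]
        push_cast
        exact ZMod.natCast_rightInverse z
      · rw [hm0def, Int.cast_sub, Int.cast_natCast, Int.cast_natCast,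
          ZMod.natCast_self, sub_zero]
        exact ZMod.natCast_rightInverse z
  have himg : g '' (leeSphere 2 r) = Set.univ := by
    apply Set.eq_univ_of_forall
    intro z
    obtain ⟨x, hx, hgx⟩ := hsurj z
    exact ⟨x, hx, hgx⟩
  calc sphereCard 2 r = (leeSphere 2 r).ncard := rfl
    _ = (g '' (leeSphere 2 r)).ncard := (Set.ncard_image_of_injOn hinj).symm
    _ = (Set.univ : Set (ZMod K)).ncard := by rw [himg]
    _ = Nat.card (ZMod K) := Set.ncard_univ _
    _ = K := Nat.card_zmod K

/-- The defining homomorphism of the code. -/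
def qphi (c k : ℕ) : (Fin 2 → ℤ) →+ ZMod k where
  toFun x := ((c * x 0 - (c + 1) * x 1 : ℤ) : ZMod k)
  map_zero' := by simp
  map_add' x y := by
    simp only [Pi.add_apply]
    push_cast
    ring

lemma qphi_mem_ker_iff (c k : ℕ) (x : Fin 2 → ℤ) :
    x ∈ (qphi c k).ker ↔ (k:ℤ) ∣ ((c:ℤ) * x 0 - ((c:ℤ) + 1) * x 1) := by
  rw [AddMonoidHom.mem_ker]
  show ((c * x 0 - (c + 1) * x 1 : ℤ) : ZMod k) = 0 ↔ _
  rw [ZMod.intCast_zmod_eq_zero_iff_dvd]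

lemma construction (e c k : ℕ) (he : 1 ≤ e) (hec : e ≤ c) (hce : c ≤ e + 1)
    (hmin : 2 * e * (c + 1) < k) (hcov : k ≤ 2 * (e + 1) * (c + 1) + 1) :
    ∃ L : AddSubgroup (Fin 2 → ℤ),
      IsQPLCode e (L : Set (Fin 2 → ℤ)) ∧
      L.index = k ∧
      ∀ x : Fin 2 → ℤ, (k : ℤ) • x ∈ L := by
  haveI : NeZero k := ⟨by omega⟩
  have hkZ : (0:ℤ) < (k:ℤ) := by exact_mod_cast Nat.pos_of_ne_zero (NeZero.ne k)
  have heZ : (1:ℤ) ≤ (e:ℤ) := by exact_mod_cast he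
  have hecZ : (e:ℤ) ≤ (c:ℤ) := by exact_mod_cast hec
  have hceZ : (c:ℤ) ≤ (e:ℤ) + 1 := by exact_mod_cast hce
  have hminZ : 2 * (e:ℤ) * ((c:ℤ) + 1) < (k:ℤ) := by exact_mod_cast hmin
  have hcovZ : (k:ℤ) ≤ 2 * ((e:ℤ) + 1) * ((c:ℤ) + 1) + 1 := by exact_mod_cast hcov
  refine ⟨(qphi c k).ker, ⟨?_, ?_⟩, ?_, ?_⟩
  · -- minimum distance
    intro v hv w hw hne
    by_contra hlt
    push_neg at hlt
    have hd : (leeDist v w : ℤ) ≤ 2 * (e:ℤ) := by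
      have : leeDist v w ≤ 2 * e := by omega
      exact_mod_cast this
    rw [leeDist_cast] at hd
    have hv' := (qphi_mem_ker_iff c k v).mp hv
    have hw' := (qphi_mem_ker_iff c k w).mp hw
    have hdvd : (k:ℤ) ∣ ((c:ℤ) * (v 0 - w 0) - ((c:ℤ) + 1) * (v 1 - w 1)) := by
      have h := dvd_sub hv' hw'
      have heq : ((c:ℤ) * v 0 - ((c:ℤ) + 1) * v 1) - ((c:ℤ) * w 0 - ((c:ℤ) + 1) * w 1)
          = (c:ℤ) * (v 0 - w 0) - ((c:ℤ) + 1) * (v 1 - w 1) := by ring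
      rwa [heq] at h
    obtain ⟨hx, hy⟩ := mindist e c k (v 0 - w 0) (v 1 - w 1) heZ hecZ hminZ hdvd hd
    apply hne
    funext i
    fin_cases i
    · simpa using sub_eq_zero.mp hx
    · simpa using sub_eq_zero.mp hy
  · -- covering radius
    intro x
    set wv : ℤ := (c:ℤ) * x 0 - ((c:ℤ) + 1) * x 1 with hwvdef
    set m0 : ℤ := wv % k with hm0def
    have hm00 : 0 ≤ m0 := Int.emod_nonneg _ (ne_of_gt hkZ)
    have hm01 : m0 < k := Int.emod_lt_of_pos _ hkZ
    have hdm0 : (k:ℤ) ∣ wv - m0 := ⟨wv / k, by rw [hm0def, Int.emod_def]; ring⟩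
    set m : ℤ := if m0 ≤ ((e:ℤ) + 1) * ((c:ℤ) + 1) then m0 else m0 - k with hmdef
    have hdm : (k:ℤ) ∣ wv - m := by
      rw [hmdef]
      split_ifs with h
      · exact hdm0
      · have : wv - (m0 - k) = (wv - m0) + k := by ring
        rw [this]
        exact dvd_add hdm0 ⟨1, by ring⟩
    have hmabs : |m| ≤ ((e:ℤ) + 1) * ((c:ℤ) + 1) := by
      rw [hmdef]
      split_ifs with h
      · rwa [abs_of_nonneg hm00]
      · push_neg at h
        rw [abs_le]
        constructor <;> nlinarith
    obtain ⟨a, b, hab, heq⟩ := cov c ((e:ℤ) + 1) m (by linarith) hceZ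
      (by linarith) hmabs
    refine ⟨x - ![a, b], ?_, ?_⟩
    · rw [SetLike.mem_coe, qphi_mem_ker_iff]
      have h1 : (c:ℤ) * (x - ![a, b]) 0 - ((c:ℤ) + 1) * (x - ![a, b]) 1
          = wv - ((c:ℤ) * a - ((c:ℤ) + 1) * b) := by
        simp [hwvdef]; ring
      rw [h1, heq]
      exact hdm
    · have hcast : (leeDist x (x - ![a, b]) : ℤ) = |a| + |b| := by
        rw [leeDist_cast]
        simp
      have : (leeDist x (x - ![a, b]) : ℤ) ≤ (e:ℤ) + 1 := by rw [hcast]; linarith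
      exact_mod_cast this
  · -- index
    have hsurj : Function.Surjective (qphi c k) := by
      intro z
      refine ⟨fun _ => -(ZMod.cast z : ℤ), ?_⟩
      show ((c * (-(ZMod.cast z : ℤ)) - (c + 1) * (-(ZMod.cast z : ℤ)) : ℤ) : ZMod k) = z
      have h : ((c:ℤ) * (-(ZMod.cast z : ℤ)) - ((c:ℤ) + 1) * (-(ZMod.cast z : ℤ)))
          = (ZMod.cast z : ℤ) := by ring
      rw [h, ZMod.intCast_zmod_cast]
    rw [AddSubgroup.index_ker]
    rw [AddMonoidHom.range_eq_top_of_surjective _ hsurj]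
    rw [Nat.card_congr AddSubgroup.topEquiv.toEquiv]
    exact Nat.card_zmod k
  · -- periodicity
    intro x
    have h : (qphi c k) ((k:ℤ) • x) = 0 := by
      rw [map_zsmul, zsmul_eq_mul, Int.cast_natCast, ZMod.natCast_self, zero_mul]
    exact h

theorem linear_QPL_dim_two_periodic (e : ℕ) (he : 1 ≤ e)
    (k : ℕ) (hk₁ : sphereCard 2 e ≤ k) (hk₂ : k < sphereCard 2 (e + 1)) :
    ∃ L : AddSubgroup (Fin 2 → ℤ),
      IsQPLCode e (L : Set (Fin 2 → ℤ)) ∧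
      L.index = k ∧
      ∀ x : Fin 2 → ℤ, (k : ℤ) • x ∈ L := by
  rw [sphereCard_eq e he] at hk₁
  rw [sphereCard_eq (e + 1) (by omega)] at hk₂
  by_cases hc : k ≤ 2 * e * e + 4 * e + 3
  · refine construction e e k he le_rfl (by omega) ?_ ?_
    · have h : 2 * e * (e + 1) = 2 * e * e + 2 * e := by ring
      omega
    · have h : 2 * (e + 1) * (e + 1) + 1 = 2 * e * e + 4 * e + 3 := by ring
      omega
  · refine construction e (e + 1) k he (by omega) (by omega) ?_ ?_
    · have h : 2 * e * (e + 1 + 1) = 2 * e * e + 4 * e := by ring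
      omega
    · have h1 : 2 * (e + 1) * (e + 1 + 1) + 1 = 2 * e * e + 6 * e + 5 := by ring
      have h2 : 2 * (e + 1) * (e + 1) + 2 * (e + 1) + 1 = 2 * e * e + 6 * e + 5 := by ring
      omega
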